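/- If P and Q are nonzero polynomials in ℝ[x₁, x₂] with no common (nonconstant) factor, then Z(P) ∩ Z(Q) ⊂ ℝ² contains at most (deg P)·(deg Q) points. -/

import Mathlib

set_option synthInstance.maxHeartbeats 1000000
set_option maxHeartbeats 1000000

open MvPolynomial

section DegreeLemmas
variable {σ : Type*} {R : Type*} [CommRing R] [IsDomain R]

lemma finsupp_degree_eq_sum (d : σ →₀ ℕ) : d.degree = d.sum fun _ e => e := by
  simp [Finsupp.degree, Finsupp.sum]
  rfl

omit [IsDomain R] in
lemma topComp_ne_zero (p : MvPolynomial σ R) (hp : p ≠ 0) :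
    homogeneousComponent p.totalDegree p ≠ 0 := by
  obtain ⟨d, hd, hdeg⟩ := Finset.exists_mem_eq_sup p.support (support_nonempty.mpr hp)
    (fun m => m.sum fun _ e => e)
  intro h
  have hc := coeff_homogeneousComponent (σ := σ) (R := R) p.totalDegree p d
  rw [h, coeff_zero, if_pos (by rw [finsupp_degree_eq_sum, totalDegree, hdeg])] at hc
  exact (MvPolynomial.mem_support_iff.mp hd) hc.symm

omit [IsDomain R] in
lemma eq_C_of_totalDegree_zero {p : MvPolynomial σ R} (h : p.totalDegree = 0) :
    p = C (coeff 0 p) := by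
  classical
  have h' := (totalDegree_eq_zero_iff σ p).mp h
  ext d
  rcases eq_or_ne d 0 with rfl | hd
  · simp
  · rw [MvPolynomial.coeff_C, if_neg (Ne.symm hd)]
    by_contra hc
    have hds : d ∈ p.support := MvPolynomial.mem_support_iff.mpr hc
    exact hd (Finsupp.ext fun x => h' d hds x)

omit [IsDomain R] in
lemma lowComp (p : MvPolynomial σ R) :
    p - homogeneousComponent p.totalDegree p = 0 ∨
      (p - homogeneousComponent p.totalDegree p).totalDegree < p.totalDegree := by
  by_cases h : p - homogeneousComponent p.totalDegree p = 0
  · exact Or.inl h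
  rcases Nat.eq_zero_or_pos p.totalDegree with h0 | h0
  · left
    rw [h0, homogeneousComponent_zero]
    exact sub_eq_zero.mpr (eq_C_of_totalDegree_zero h0)
  right
  rw [totalDegree, Finset.sup_lt_iff (by exact h0 : ⊥ < p.totalDegree)]
  intro b hb
  have hcoeff : coeff b (p - homogeneousComponent p.totalDegree p) ≠ 0 :=
    MvPolynomial.mem_support_iff.mp hb
  by_contra hge
  push_neg at hge
  have hle : (b.sum fun _ e => e) ≤ p.totalDegree := by
    rcases eq_or_ne (coeff b p) 0 with hc | hc
    · exfalso
      have h2 := coeff_homogeneousComponent (σ := σ) (R := R) p.totalDegree p b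
      rw [MvPolynomial.coeff_sub, h2, hc] at hcoeff
      simp at hcoeff
    · exact le_totalDegree (MvPolynomial.mem_support_iff.mpr hc)
  have heq : (b.sum fun _ e => e) = p.totalDegree := le_antisymm hle hge
  have h2 := coeff_homogeneousComponent (σ := σ) (R := R) p.totalDegree p b
  rw [if_pos (by rw [finsupp_degree_eq_sum, heq])] at h2
  rw [MvPolynomial.coeff_sub, h2, sub_self] at hcoeff
  exact hcoeff rfl

lemma totalDegree_mul_eq {p q : MvPolynomial σ R} (hp : p ≠ 0) (hq : q ≠ 0) :
    (p * q).totalDegree = p.totalDegree + q.totalDegree := by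
  refine le_antisymm (totalDegree_mul p q) ?_
  set dp := p.totalDegree with hdp
  set dq := q.totalDegree with hdq
  set pt := homogeneousComponent dp p with hptdef
  set qt := homogeneousComponent dq q with hqtdef
  have hpt : pt.IsHomogeneous dp := homogeneousComponent_isHomogeneous dp p
  have hqt : qt.IsHomogeneous dq := homogeneousComponent_isHomogeneous dq q
  have hcross : ∀ r s : MvPolynomial σ R,
      (r * s = 0 ∨ r.totalDegree + s.totalDegree < dp + dq) →
      homogeneousComponent (dp + dq) (r * s) = 0 := by
    intro r s hrs
    rcases hrs with h0 | hlt
    · rw [h0, map_zero]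
    · exact homogeneousComponent_eq_zero _ _ (lt_of_le_of_lt (totalDegree_mul r s) hlt)
  have key : homogeneousComponent (dp + dq) (p * q) = pt * qt := by
    have hsplit : p * q = pt * qt + ((p - pt) * qt + (pt * (q - qt) + (p - pt) * (q - qt))) := by
      ring
    have h1 : homogeneousComponent (dp + dq) (pt * qt) = pt * qt := by
      rw [homogeneousComponent_of_mem ((mem_homogeneousSubmodule _ _).mpr (hpt.mul hqt)), if_pos rfl]
    have hql : (q - qt).totalDegree ≤ dq := (totalDegree_sub q qt).trans
      (max_le le_rfl hqt.totalDegree_le)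
    have h2 : homogeneousComponent (dp + dq) ((p - pt) * qt) = 0 := by
      refine hcross _ _ ?_
      rcases lowComp p with h | h <;> rw [← hdp, ← hptdef] at h
      · exact Or.inl (by rw [h, zero_mul])
      · exact Or.inr (by have h5 := hqt.totalDegree_le; omega)
    have h3 : homogeneousComponent (dp + dq) (pt * (q - qt)) = 0 := by
      rw [mul_comm]
      refine hcross _ _ ?_
      rcases lowComp q with h | h <;> rw [← hdq, ← hqtdef] at h
      · exact Or.inl (by rw [h, zero_mul])
      · exact Or.inr (by have h5 := hpt.totalDegree_le; omega)
    have h4 : homogeneousComponent (dp + dq) ((p - pt) * (q - qt)) = 0 := by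
      refine hcross _ _ ?_
      rcases lowComp p with h | h <;> rw [← hdp, ← hptdef] at h
      · exact Or.inl (by rw [h, zero_mul])
      · exact Or.inr (by omega)
    rw [hsplit, map_add, map_add, map_add, h1, h2, h3, h4]
    ring
  have hne : pt * qt ≠ 0 := mul_ne_zero (topComp_ne_zero p hp) (topComp_ne_zero q hq)
  by_contra hlt
  push_neg at hlt
  exact hne (key ▸ homogeneousComponent_eq_zero _ _ hlt)

end DegreeLemmas

section Dim
open Finset

def bezT (e : ℕ) : ℕ := ∑ k ∈ Finset.range (e+2), k

lemma two_T (e : ℕ) : 2 * bezT e = (e+1) * (e+2) := by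
  have h : bezT e * 2 = (e+1) * (e+2) := by
    rw [bezT, Finset.sum_range_id_mul_two, show e+2-1 = e+1 from rfl, mul_comm]
  omega

lemma T_identity (m n : ℕ) :
    bezT (m*n+m+n) + bezT (m*n) = m*n + bezT (m*n+n) + bezT (m*n+m) := by
  have h1 := two_T (m*n+m+n)
  have h2 := two_T (m*n)
  have h3 := two_T (m*n+n)
  have h4 := two_T (m*n+m)
  nlinarith [h1, h2, h3, h4]

def Fe (e : ℕ) : Finset (ℕ × ℕ) := (Finset.range (e+1)).biUnion fun k => Finset.HasAntidiagonal.antidiagonal k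

lemma mem_Fe {e : ℕ} {p : ℕ × ℕ} : p ∈ Fe e ↔ p.1 + p.2 ≤ e := by
  simp only [Fe, Finset.mem_biUnion, Finset.mem_range, Finset.HasAntidiagonal.mem_antidiagonal]
  constructor
  · rintro ⟨k, hk, rfl⟩; omega
  · intro h; exact ⟨p.1 + p.2, by omega, rfl⟩

lemma card_Fe (e : ℕ) : (Fe e).card = bezT e := by
  rw [Fe, Finset.card_biUnion]
  · simp only [Finset.Nat.card_antidiagonal]
    rw [bezT, Finset.sum_range_succ' (fun i => i) (e+1)]
    simp
  · intro x _ y _ hxy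
    simp only [Finset.disjoint_left, Finset.HasAntidiagonal.mem_antidiagonal]
    rintro a rfl h
    exact hxy h

lemma finsupp_sum_fin_two (n : Fin 2 →₀ ℕ) : (n.sum fun _ e => e) = n 0 + n 1 := by
  rw [Finsupp.sum_fintype _ _ (fun _ => rfl)]
  exact Fin.sum_univ_two _

lemma finrank_V (e : ℕ) :
    Module.finrank ℝ (restrictTotalDegree (Fin 2) ℝ e) = bezT e := by
  have b : Module.Basis {n : Fin 2 →₀ ℕ | (n.sum fun _ k => k) ≤ e} ℝ
      (restrictTotalDegree (Fin 2) ℝ e) := basisRestrictSupport ℝ _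
  rw [Module.finrank_eq_nat_card_basis b]
  have e1 : {n : Fin 2 →₀ ℕ | (n.sum fun _ k => k) ≤ e} ≃ {p : ℕ × ℕ // p ∈ Fe e} := by
    refine Equiv.subtypeEquiv (Finsupp.equivFunOnFinite.trans (piFinTwoEquiv fun _ => ℕ))
      fun n => ?_
    rw [mem_Fe]
    show (n.sum fun _ k => k) ≤ e ↔ n 0 + n 1 ≤ e
    rw [finsupp_sum_fin_two]
  rw [Nat.card_congr e1, Nat.card_eq_fintype_card, Fintype.card_coe, card_Fe]

end Dim

section Interp

lemma sep_poly (s t : Fin 2 → ℝ) (h : t ≠ s) :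
    ∃ L : MvPolynomial (Fin 2) ℝ, L.totalDegree ≤ 1 ∧ eval s L = 1 ∧ eval t L = 0 := by
  obtain ⟨i, hi⟩ := Function.ne_iff.mp h
  refine ⟨C ((s i - t i)⁻¹) * (X i - C (t i)), ?_, ?_, ?_⟩
  · refine (totalDegree_mul _ _).trans ?_
    have h1 : (C ((s i - t i)⁻¹) : MvPolynomial (Fin 2) ℝ).totalDegree = 0 := totalDegree_C _
    have h2 : ((X i - C (t i)) : MvPolynomial (Fin 2) ℝ).totalDegree ≤ 1 :=
      (totalDegree_sub _ _).trans (by simp [totalDegree_X, totalDegree_C])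
    omega
  · have hne : s i - t i ≠ 0 := sub_ne_zero.mpr (Ne.symm hi)
    simp [eval_mul, eval_sub, inv_mul_cancel₀ hne]
  · simp

lemma interp_basis (S : Finset (Fin 2 → ℝ)) (s : Fin 2 → ℝ) (hs : s ∈ S) :
    ∃ p : MvPolynomial (Fin 2) ℝ, p.totalDegree ≤ S.card - 1 ∧ eval s p = 1 ∧
      ∀ t ∈ S, t ≠ s → eval t p = 0 := by
  classical
  choose L hdeg h1 h0 using fun t : {t // t ∈ S.erase s} =>
    sep_poly s t.1 (Finset.ne_of_mem_erase t.2)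
  refine ⟨∏ t ∈ (S.erase s).attach, L t, ?_, ?_, ?_⟩
  · refine (totalDegree_finset_prod _ _).trans ?_
    calc ∑ t ∈ (S.erase s).attach, (L t).totalDegree
        ≤ ∑ _t ∈ (S.erase s).attach, 1 := Finset.sum_le_sum fun t _ => hdeg t
      _ = (S.erase s).card := by simp
      _ ≤ S.card - 1 := by rw [Finset.card_erase_of_mem hs]
  · rw [map_prod]
    exact Finset.prod_eq_one fun t _ => h1 t
  · intro t ht hts
    rw [map_prod]
    have htm : t ∈ S.erase s := Finset.mem_erase.mpr ⟨hts, ht⟩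
    exact Finset.prod_eq_zero (Finset.mem_attach _ ⟨t, htm⟩) (h0 ⟨t, htm⟩)

lemma interp (S : Finset (Fin 2 → ℝ)) (d : ℕ) (hd : S.card ≤ d + 1) (f : (Fin 2 → ℝ) → ℝ) :
    ∃ p : MvPolynomial (Fin 2) ℝ, p.totalDegree ≤ d ∧ ∀ s ∈ S, eval s p = f s := by
  classical
  choose p hdeg h1 h0 using fun s : {s // s ∈ S} => interp_basis S s.1 s.2
  refine ⟨∑ s ∈ S.attach, f s.1 • p s, ?_, ?_⟩
  · refine (totalDegree_finset_sum _ _).trans (Finset.sup_le fun s _ => ?_)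
    exact (totalDegree_smul_le _ _).trans ((hdeg s).trans (by omega))
  · intro t ht
    rw [map_sum, Finset.sum_eq_single (⟨t, ht⟩ : {s // s ∈ S})]
    · rw [smul_eval, h1 ⟨t, ht⟩, mul_one]
    · intro b _ hbt
      rw [smul_eval, h0 b t ht (fun h => hbt (Subtype.ext h.symm)), mul_zero]
    · intro h; exact absurd (Finset.mem_attach _ _) h

end Interp

section Key

noncomputable def evalLM (s : Fin 2 → ℝ) : MvPolynomial (Fin 2) ℝ →ₗ[ℝ] ℝ where
  toFun := eval s
  map_add' := fun x y => by simp
  map_smul' := fun r x => by simp [smul_eval]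

lemma key_lemma (P Q : MvPolynomial (Fin 2) ℝ) (hP : P ≠ 0) (hQ : Q ≠ 0)
    (hrel : IsRelPrime Q P) (S : Finset (Fin 2 → ℝ))
    (hSP : ∀ s ∈ S, eval s P = 0) (hSQ : ∀ s ∈ S, eval s Q = 0)
    (hcard : S.card = P.totalDegree * Q.totalDegree + 1) : False := by
  classical
  obtain ⟨m, hm⟩ : ∃ m, P.totalDegree = m := ⟨_, rfl⟩
  obtain ⟨n, hn⟩ : ∃ n, Q.totalDegree = n := ⟨_, rfl⟩
  rw [hm, hn] at hcard
  set c := m * n with hc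
  set a := c + n with ha
  set b := c + m with hb
  set d := c + m + n with hd
  -- The evaluation map
  let E : restrictTotalDegree (Fin 2) ℝ d →ₗ[ℝ] ({s // s ∈ S} → ℝ) :=
    LinearMap.pi fun s => (evalLM s.1).comp (restrictTotalDegree (Fin 2) ℝ d).subtype
  -- The Koszul-type map
  have hmem : ∀ x : restrictTotalDegree (Fin 2) ℝ a × restrictTotalDegree (Fin 2) ℝ b,
      ((x.1 : MvPolynomial (Fin 2) ℝ) * P + (x.2 : MvPolynomial (Fin 2) ℝ) * Q)
        ∈ restrictTotalDegree (Fin 2) ℝ d := by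
    intro x
    rw [mem_restrictTotalDegree]
    have h1 : ((x.1 : MvPolynomial (Fin 2) ℝ) * P).totalDegree ≤ a + m :=
      (totalDegree_mul _ _).trans
        (add_le_add ((mem_restrictTotalDegree _ _ _).mp x.1.2) hm.le)
    have h2 : ((x.2 : MvPolynomial (Fin 2) ℝ) * Q).totalDegree ≤ b + n :=
      (totalDegree_mul _ _).trans
        (add_le_add ((mem_restrictTotalDegree _ _ _).mp x.2.2) hn.le)
    refine (totalDegree_add _ _).trans ?_
    simp only [max_le_iff]
    omega
  let f : restrictTotalDegree (Fin 2) ℝ a × restrictTotalDegree (Fin 2) ℝ b →ₗ[ℝ]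
      MvPolynomial (Fin 2) ℝ :=
    (LinearMap.mulRight ℝ P).comp ((restrictTotalDegree (Fin 2) ℝ a).subtype.comp
      (LinearMap.fst ℝ _ _)) +
    (LinearMap.mulRight ℝ Q).comp ((restrictTotalDegree (Fin 2) ℝ b).subtype.comp
      (LinearMap.snd ℝ _ _))
  let φ := f.codRestrict (restrictTotalDegree (Fin 2) ℝ d) hmem
  -- the syzygy map
  have hmemA : ∀ x : restrictTotalDegree (Fin 2) ℝ c,
      (x : MvPolynomial (Fin 2) ℝ) * Q ∈ restrictTotalDegree (Fin 2) ℝ a := by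
    intro x
    rw [mem_restrictTotalDegree]
    exact (totalDegree_mul _ _).trans
      (by have := (mem_restrictTotalDegree _ _ _).mp x.2; omega)
  have hmemB : ∀ x : restrictTotalDegree (Fin 2) ℝ c,
      (x : MvPolynomial (Fin 2) ℝ) * (-P) ∈ restrictTotalDegree (Fin 2) ℝ b := by
    intro x
    rw [mem_restrictTotalDegree]
    refine (totalDegree_mul _ _).trans ?_
    rw [totalDegree_neg]
    have := (mem_restrictTotalDegree _ _ _).mp x.2; omega
  let ψ : restrictTotalDegree (Fin 2) ℝ c →ₗ[ℝ]
      restrictTotalDegree (Fin 2) ℝ a × restrictTotalDegree (Fin 2) ℝ b :=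
    (((LinearMap.mulRight ℝ Q).comp (restrictTotalDegree (Fin 2) ℝ c).subtype).codRestrict
      (restrictTotalDegree (Fin 2) ℝ a) hmemA).prod
    (((LinearMap.mulRight ℝ (-P)).comp (restrictTotalDegree (Fin 2) ℝ c).subtype).codRestrict
      (restrictTotalDegree (Fin 2) ℝ b) hmemB)
  -- E is surjective
  have hEsurj : Function.Surjective E := by
    intro g
    obtain ⟨p, hpd, hpe⟩ := interp S d (by omega) fun t => if h : t ∈ S then g ⟨t, h⟩ else 0
    refine ⟨⟨p, (mem_restrictTotalDegree _ _ _).mpr hpd⟩, ?_⟩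
    funext s
    have : E ⟨p, (mem_restrictTotalDegree _ _ _).mpr hpd⟩ s = eval s.1 p := rfl
    rw [this, hpe s.1 s.2, dif_pos s.2]
  -- range φ ≤ ker E
  have hrange : LinearMap.range φ ≤ LinearMap.ker E := by
    rintro y ⟨x, rfl⟩
    rw [LinearMap.mem_ker]
    funext s
    have h1 : E (φ x) s = eval s.1 ((x.1 : MvPolynomial (Fin 2) ℝ) * P
        + (x.2 : MvPolynomial (Fin 2) ℝ) * Q) := rfl
    rw [h1, map_add, map_mul, map_mul, hSP s.1 s.2, hSQ s.1 s.2, mul_zero, mul_zero, add_zero]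
    rfl
  -- ker φ ≤ range ψ
  have hker : LinearMap.ker φ ≤ LinearMap.range ψ := by
    rintro ⟨A, B⟩ hk
    rw [LinearMap.mem_ker] at hk
    have hk' : (A : MvPolynomial (Fin 2) ℝ) * P + (B : MvPolynomial (Fin 2) ℝ) * Q = 0 := by
      have := congrArg (Subtype.val) hk
      exact this
    have hdvd : Q ∣ (A : MvPolynomial (Fin 2) ℝ) := by
      refine hrel.dvd_of_dvd_mul_left ⟨-(B : MvPolynomial (Fin 2) ℝ), ?_⟩
      linear_combination hk'
    obtain ⟨C', hC'⟩ := hdvd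
    have hCmem : C' ∈ restrictTotalDegree (Fin 2) ℝ c := by
      rw [mem_restrictTotalDegree]
      rcases eq_or_ne C' 0 with rfl | hC0
      · simp
      · have hdegA : (A : MvPolynomial (Fin 2) ℝ).totalDegree ≤ a :=
          (mem_restrictTotalDegree _ _ _).mp A.2
        rw [hC'] at hdegA
        rw [totalDegree_mul_eq hQ hC0] at hdegA
        omega
    have hB : (B : MvPolynomial (Fin 2) ℝ) = C' * (-P) := by
      have h2 : Q * ((C' * P) + (B : MvPolynomial (Fin 2) ℝ)) = 0 := by
        rw [hC'] at hk'; ring_nf; ring_nf at hk'; linear_combination hk'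
      rcases mul_eq_zero.mp h2 with h | h
      · exact absurd h hQ
      · have : (B : MvPolynomial (Fin 2) ℝ) = -(C' * P) := by linear_combination h
        rw [this]; ring
    refine ⟨⟨C', hCmem⟩, ?_⟩
    refine Prod.ext (Subtype.ext ?_) (Subtype.ext ?_)
    · show C' * Q = (A : MvPolynomial (Fin 2) ℝ)
      rw [hC', mul_comm]
    · show C' * (-P) = (B : MvPolynomial (Fin 2) ℝ)
      rw [hB]
  -- ψ is injective
  have hψinj : Function.Injective ψ := by
    intro x y hxy
    have h1 : (x : MvPolynomial (Fin 2) ℝ) * Q = (y : MvPolynomial (Fin 2) ℝ) * Q := by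
      have := congrArg (fun z => ((Prod.fst z : restrictTotalDegree (Fin 2) ℝ a) :
        MvPolynomial (Fin 2) ℝ)) hxy
      exact this
    exact Subtype.ext (mul_right_cancel₀ hQ h1)
  -- rank computations
  have r1 := LinearMap.finrank_range_add_finrank_ker E
  have r2 := LinearMap.finrank_range_add_finrank_ker φ
  have hrangeE : Module.finrank ℝ (LinearMap.range E) = S.card := by
    rw [LinearMap.range_eq_top.mpr hEsurj, finrank_top, Module.finrank_fintype_fun_eq_card,
      Fintype.card_coe]
  have hrankψ : Module.finrank ℝ (LinearMap.range ψ) = bezT c := by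
    rw [LinearMap.finrank_range_of_inj hψinj, finrank_V]
  have hkerφ_le : Module.finrank ℝ (LinearMap.ker φ) ≤ bezT c := by
    rw [← hrankψ]
    exact Submodule.finrank_mono hker
  have hrangeφ_le : Module.finrank ℝ (LinearMap.range φ) ≤
      Module.finrank ℝ (LinearMap.ker E) := Submodule.finrank_mono hrange
  have hVd : Module.finrank ℝ (restrictTotalDegree (Fin 2) ℝ d) = bezT d := finrank_V d
  have hVab : Module.finrank ℝ
      (restrictTotalDegree (Fin 2) ℝ a × restrictTotalDegree (Fin 2) ℝ b) = bezT a + bezT b := by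
    rw [Module.finrank_prod, finrank_V, finrank_V]
  have hTid : bezT d + bezT c = m * n + bezT a + bezT b := by
    have := T_identity m n
    simpa [hc, ha, hb, hd] using this
  rw [hrangeE, hVd] at r1
  rw [hVab] at r2
  omega

end Key

lemma isRelPrime_of_hcop (P Q : MvPolynomial (Fin 2) ℝ) (hQ : Q ≠ 0)
    (hcop : ∀ R : MvPolynomial (Fin 2) ℝ, R ∣ P → R ∣ Q → R.totalDegree = 0) :
    IsRelPrime Q P := by
  intro R hRQ hRP
  have hdeg := hcop R hRP hRQ
  have hR0 : R ≠ 0 := by rintro rfl; exact hQ (zero_dvd_iff.mp hRQ)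
  have hRC := eq_C_of_totalDegree_zero hdeg
  set r := coeff 0 R with hrdef
  have hr : r ≠ 0 := fun h => hR0 (by rw [hRC, h, map_zero])
  exact IsUnit.of_mul_eq_one (a := R) (C r⁻¹)
    (by rw [hRC, ← map_mul, mul_inv_cancel₀ hr, map_one])

def zeroSet (Q : MvPolynomial (Fin 2) ℝ) : Set (Fin 2 → ℝ) :=
  {x | MvPolynomial.eval x Q = 0}

theorem stmt4 (P Q : MvPolynomial (Fin 2) ℝ) (hP : P ≠ 0) (hQ : Q ≠ 0)
    (hcop : ∀ R : MvPolynomial (Fin 2) ℝ, R ∣ P → R ∣ Q → R.totalDegree = 0) :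
    (zeroSet P ∩ zeroSet Q).ncard ≤ P.totalDegree * Q.totalDegree := by
  classical
  by_contra h
  push_neg at h
  have hne : (zeroSet P ∩ zeroSet Q).ncard ≠ 0 := by omega
  have hfin : (zeroSet P ∩ zeroSet Q).Finite := Set.finite_of_ncard_ne_zero hne
  rw [Set.ncard_eq_toFinset_card _ hfin] at h
  obtain ⟨S, hSsub, hScard⟩ := Finset.exists_subset_card_eq
    (show P.totalDegree * Q.totalDegree + 1 ≤ hfin.toFinset.card by omega)
  have hmem : ∀ s ∈ S, s ∈ zeroSet P ∩ zeroSet Q := by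
    intro s hs
    have := hSsub hs
    rwa [Set.Finite.mem_toFinset] at this
  exact key_lemma P Q hP hQ (isRelPrime_of_hcop P Q hQ hcop) S
    (fun s hs => (hmem s hs).1) (fun s hs => (hmem s hs).2) hScard
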